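/- arXiv:1407.5937 — 6 statements merged into one kernel-verified Lean document; each statement's English description precedes it below -/
import Mathlib

section
/- A finite group admits a factorization as a setwise product of finitely many pairwise conjugate proper subgroups if and only if it is not nilpotent. -/
open Pointwise

/-- The conjugate subgroup `A ^ g = g⁻¹ A g`. -/
def conjugate {G : Type*} [Group G] (A : Subgroup G) (g : G) : Subgroup G :=
  Subgroup.map (MulAut.conj g⁻¹).toMonoidHom A

section Aux

variable {G : Type*} [Group G]

lemma mem_conjugate_iff {A : Subgroup G} {g x : G} :
    x ∈ conjugate A g ↔ ∃ a ∈ A, g⁻¹ * a * g = x := by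
  simp [conjugate, Subgroup.mem_map, MulAut.conj_apply]

lemma conjugate_one (A : Subgroup G) : conjugate A 1 = A := by
  ext x; simp [mem_conjugate_iff]

lemma conjugate_conjugate (A : Subgroup G) (a g : G) :
    conjugate (conjugate A a) g = conjugate A (a * g) := by
  unfold conjugate
  rw [Subgroup.map_map]
  congr 1
  ext x
  simp [MulAut.conj_apply, mul_assoc]

lemma conjugate_ne_top {A : Subgroup G} (h : A ≠ ⊤) (g : G) : conjugate A g ≠ ⊤ := by
  intro hc
  apply h
  have inj := Subgroup.map_injective (f := (MulAut.conj g⁻¹).toMonoidHom)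
    (MulAut.conj g⁻¹).injective
  apply inj
  show conjugate A g = _
  rw [hc]
  exact (Subgroup.map_top_of_surjective _ (MulAut.conj g⁻¹).surjective).symm

lemma conjugate_eq_of_normal (M : Subgroup G) [hM : M.Normal] (g : G) : conjugate M g = M := by
  ext x
  rw [mem_conjugate_iff]
  constructor
  · rintro ⟨a, ha, rfl⟩
    simpa using hM.conj_mem a ha g⁻¹
  · intro hx
    exact ⟨g * x * g⁻¹, by simpa using hM.conj_mem x hx g, by group⟩

lemma conjugate_le {A M : Subgroup G} (h : A ≤ M) (g : G) : conjugate A g ≤ conjugate M g :=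
  Subgroup.map_mono h

lemma one_mem_listProd : ∀ l : List (Set G), (∀ s ∈ l, (1:G) ∈ s) → (1:G) ∈ l.prod
  | [], _ => by simp [Set.mem_one]
  | s :: t, h => by
      rw [List.prod_cons]
      exact ⟨1, h s (by simp), 1, one_mem_listProd t (fun u hu => h u (by simp [hu])), one_mul 1⟩

lemma mem_listProd_of_mem {x : G} : ∀ l : List (Set G), (∀ s ∈ l, (1:G) ∈ s) →
    ∀ t ∈ l, x ∈ t → x ∈ l.prod
  | [], _, t, ht, _ => by simp at ht
  | s :: r, h, t, ht, hx => by
      rw [List.prod_cons]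
      rcases List.mem_cons.1 ht with rfl | ht'
      · exact ⟨x, hx, 1, one_mem_listProd r (fun u hu => h u (by simp [hu])), mul_one x⟩
      · exact ⟨1, h s (by simp), x,
          mem_listProd_of_mem r (fun u hu => h u (by simp [hu])) t ht' hx, one_mul x⟩

lemma prod_mem_listProd (f : G → Set G) : ∀ l : List G, (∀ y ∈ l, y ∈ f y) →
    l.prod ∈ (l.map f).prod
  | [], _ => by simp [Set.mem_one]
  | y :: r, h => by
      rw [List.map_cons, List.prod_cons, List.prod_cons]
      exact Set.mul_mem_mul (h y (by simp))
        (prod_mem_listProd f r (fun u hu => h u (by simp [hu])))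

def sc (A : Subgroup G) : Set G := A

@[simp] lemma sc_def (A : Subgroup G) : sc A = (A : Set G) := rfl

lemma coe_list_eq (l : List (Subgroup G)) :
    (l.map (fun A => (A : Set G))) = l.map sc := by
  induction l with
  | nil => rfl
  | cons a t ih => simp only [List.map_cons] at *; rw [← ih]; rfl

lemma listProd_subset (M : Subgroup G) : ∀ l : List (Set G), (∀ s ∈ l, s ⊆ ↑M) →
    l.prod ⊆ ↑M
  | [], _ => by simpa [Set.one_subset] using M.one_mem
  | s :: r, h => by
      rw [List.prod_cons]
      rintro x ⟨a, ha, b, hb, rfl⟩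
      exact M.mul_mem (h s (by simp) ha)
        (listProd_subset M r (fun u hu => h u (by simp [hu])) hb)

end Aux

theorem stmt_4 (G : Type*) [Group G] [Finite G] :
    (∃ l : List (Subgroup G), 2 ≤ l.length ∧
        (∀ A ∈ l, A ≠ ⊤) ∧ (∀ A ∈ l, ∀ B ∈ l, ∃ g : G, B = conjugate A g) ∧
        (l.map (fun A => (A : Set G))).prod = Set.univ) ↔
      ¬ Group.IsNilpotent G := by
  constructor
  · rintro ⟨l, hlen, hne, hconj, hprod⟩ hnil
    rw [coe_list_eq] at hprod
    have hnormal : ∀ H : Subgroup G, IsCoatom H → H.Normal :=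
      ((isNilpotent_of_finite_tfae (G := G)).out 0 2).mp hnil
    obtain ⟨A, rest, rfl⟩ : ∃ A rest, l = A :: rest := by
      cases l with
      | nil => simp at hlen
      | cons A rest => exact ⟨A, rest, rfl⟩
    have hA : A ∈ A :: rest := by simp
    rcases IsCoatomic.eq_top_or_exists_le_coatom A with h | ⟨M, hM, hAM⟩
    · exact hne A hA h
    haveI : M.Normal := hnormal M hM
    have hsub : ∀ s ∈ (A :: rest).map sc, s ⊆ (M : Set G) := by
      intro s hs
      rcases List.mem_map.1 hs with ⟨C, hC, rfl⟩
      obtain ⟨g, rfl⟩ := hconj A hA C hC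
      show (conjugate A g : Set G) ⊆ (M : Set G)
      calc (conjugate A g : Set G) ⊆ (conjugate M g : Set G) := conjugate_le hAM g
        _ = (M : Set G) := by rw [conjugate_eq_of_normal M g]
    have : (Set.univ : Set G) ⊆ (M : Set G) := hprod ▸ listProd_subset M _ hsub
    have : M = ⊤ := by
      rw [eq_top_iff]; intro x _; exact this (Set.mem_univ x)
    exact hM.1 this
  · intro hnil
    -- obtain a non-normal maximal subgroup
    have : ¬ ∀ H : Subgroup G, IsCoatom H → H.Normal := fun h =>
      hnil (((isNilpotent_of_finite_tfae (G := G)).out 0 2).mpr h)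
    push_neg at this
    obtain ⟨H, hHco, hHnn⟩ := this
    -- its normal closure is ⊤
    have hnc : Subgroup.normalClosure (H : Set G) = ⊤ := by
      rcases (Subgroup.le_normalClosure (H := H)).lt_or_eq with h | h
      · exact hHco.2 _ h
      · exact absurd (h ▸ Subgroup.normalClosure_normal) hHnn
    -- every element of the generating set lies in some conjugate of H
    have hmem : ∀ y : G,
        y ∈ Group.conjugatesOfSet (H : Set G) ∪ (Group.conjugatesOfSet (H : Set G))⁻¹ →
        ∃ c : G, y ∈ conjugate H c := by
      have base : ∀ y ∈ Group.conjugatesOfSet (H : Set G), ∃ c : G, y ∈ conjugate H c := by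
        intro y hy
        rcases Group.mem_conjugatesOfSet_iff.1 hy with ⟨a, ha, hcj⟩
        rcases isConj_iff.1 hcj with ⟨c, rfl⟩
        exact ⟨c⁻¹, mem_conjugate_iff.2 ⟨a, ha, by group⟩⟩
      rintro y (hy | hy)
      · exact base y hy
      · obtain ⟨c, hc⟩ := base y⁻¹ (by simpa using hy)
        exact ⟨c, by simpa using (conjugate H c).inv_mem hc⟩
    classical
    -- choice of conjugating element
    let cf : G → G := fun y => if h : ∃ c : G, y ∈ conjugate H c then h.choose else 1
    have hcf : ∀ y : G,
        y ∈ Group.conjugatesOfSet (H : Set G) ∪ (Group.conjugatesOfSet (H : Set G))⁻¹ →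
        y ∈ conjugate H (cf y) := by
      intro y hy
      have h := hmem y hy
      simp only [cf, dif_pos h]
      exact h.choose_spec
    -- for each g, a list of conjugates of H whose set product contains g
    have key : ∀ g : G, ∃ Lg : List (Subgroup G),
        (∀ A ∈ Lg, ∃ c : G, A = conjugate H c) ∧
        g ∈ (Lg.map sc).prod := by
      intro g
      have hg : g ∈ Submonoid.closure
          (Group.conjugatesOfSet (H : Set G) ∪ (Group.conjugatesOfSet (H : Set G))⁻¹) := by
        have : g ∈ Subgroup.normalClosure (H : Set G) := hnc ▸ Subgroup.mem_top g
        have := this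
        rw [Subgroup.normalClosure] at this
        have h2 : g ∈ (Subgroup.closure (Group.conjugatesOfSet (H : Set G))).toSubmonoid :=
          this
        rwa [Subgroup.closure_toSubmonoid] at h2
      obtain ⟨lg, hlg, hlgp⟩ := Submonoid.exists_list_of_mem_closure hg
      refine ⟨lg.map (fun y => conjugate H (cf y)), ?_, ?_⟩
      · intro A hA
        rcases List.mem_map.1 hA with ⟨y, _, rfl⟩
        exact ⟨cf y, rfl⟩
      · rw [List.map_map]
        have := prod_mem_listProd (fun y => sc (conjugate H (cf y))) lg
          (fun y hy => hcf y (hlg y hy))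
        rw [hlgp] at this
        exact this
    choose Lg hLg1 hLg2 using key
    haveI : Fintype G := Fintype.ofFinite G
    let ls : List (List (Subgroup G)) := (Finset.univ : Finset G).toList.map Lg
    let L : List (Subgroup G) := H :: H :: ls.flatten
    have hLconj : ∀ A ∈ L, ∃ c : G, A = conjugate H c := by
      intro A hA
      rcases List.mem_cons.1 hA with h1 | hA
      · exact ⟨1, by rw [h1, conjugate_one]⟩
      rcases List.mem_cons.1 hA with h1 | hA
      · exact ⟨1, by rw [h1, conjugate_one]⟩
      rcases List.mem_flatten.1 hA with ⟨p, hp, hAp⟩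
      rcases List.mem_map.1 hp with ⟨g, _, rfl⟩
      exact hLg1 g A hAp
    refine ⟨L, ?_, ?_, ?_, ?_⟩
    · simp [L]
    · intro A hA
      obtain ⟨c, rfl⟩ := hLconj A hA
      exact conjugate_ne_top hHco.1 c
    · intro A hA B hB
      obtain ⟨a, rfl⟩ := hLconj A hA
      obtain ⟨b, rfl⟩ := hLconj B hB
      exact ⟨a⁻¹ * b, by rw [conjugate_conjugate, mul_inv_cancel_left]⟩
    · rw [coe_list_eq]
      apply Set.eq_univ_of_forall
      intro g
      show g ∈ (L.map sc).prod
      simp only [L, List.map_cons, List.prod_cons]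
      have hflat : g ∈ ((ls.flatten.map sc)).prod := by
        rw [List.map_flatten, List.prod_flatten, List.map_map]
        apply mem_listProd_of_mem _ ?_ (((Lg g).map sc).prod) ?_ (hLg2 g)
        · intro s hs
          rcases List.mem_map.1 hs with ⟨p, hp, rfl⟩
          apply one_mem_listProd
          intro u hu
          rcases List.mem_map.1 hu with ⟨B, _, rfl⟩
          exact B.one_mem
        · apply List.mem_map.2
          refine ⟨Lg g, ?_, rfl⟩
          simp [ls]
      exact ⟨1, H.one_mem, 1 * g, ⟨1, H.one_mem, g, hflat, rfl⟩, by group⟩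
end

section
/- Let G be a finite non-nilpotent group such that G/N is nilpotent for every nontrivial normal subgroup N of G. Then G has a core-free maximal subgroup, i.e., G admits a faithful primitive permutation action. -/
theorem stmt_8 (G : Type*) [Group G] [Finite G]
    (hG : ¬ Group.IsNilpotent G)
    (hq : ∀ (N : Subgroup G) [N.Normal], N ≠ ⊥ → Group.IsNilpotent (G ⧸ N)) :
    ∃ M : Subgroup G, IsCoatom M ∧ M.normalCore = ⊥ := by
  -- From the TFAE, since G is not nilpotent there is a non-normal coatom.
  have tfae := isNilpotent_of_finite_tfae (G := G)
  have h31 : (∀ H : Subgroup G, IsCoatom H → H.Normal) → Group.IsNilpotent G :=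
    (tfae.out 2 0).mp
  have : ¬ ∀ H : Subgroup G, IsCoatom H → H.Normal := fun h => hG (h31 h)
  push_neg at this
  obtain ⟨M, hM, hMn⟩ := this
  refine ⟨M, hM, ?_⟩
  by_contra hcore
  apply hMn
  -- Let N be the (nontrivial) normal core of M; G/N is nilpotent.
  set N := M.normalCore with hN
  haveI : N.Normal := M.normalCore_normal
  have hnil : Group.IsNilpotent (G ⧸ N) := hq N hcore
  have hle : N ≤ M := M.normalCore_le
  let π := QuotientGroup.mk' N
  have hsurj : Function.Surjective π := QuotientGroup.mk'_surjective N
  have hker : π.ker = N := QuotientGroup.ker_mk' N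
  have hcm : (M.map π).comap π = M := by
    rw [Subgroup.comap_map_eq, hker, sup_eq_left.mpr hle]
  -- M.map π is a coatom in G/N
  have hcoatom : IsCoatom (M.map π) := by
    constructor
    · intro htop
      apply hM.1
      rw [← hcm, htop, Subgroup.comap_top]
    · intro K hK
      have h1 : M < K.comap π := by
        refine lt_of_le_of_ne ?_ ?_
        · rw [← hcm]; exact Subgroup.comap_mono hK.le
        · intro h
          apply hK.ne
          rw [← Subgroup.map_comap_eq_self_of_surjective hsurj K, ← h]
      have h2 : K.comap π = ⊤ := hM.2 _ h1
      rw [← Subgroup.map_comap_eq_self_of_surjective hsurj K, h2,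
        Subgroup.map_top_of_surjective π hsurj]
  -- In a nilpotent group, coatoms are normal.
  have hnc : NormalizerCondition (G ⧸ N) := normalizerCondition_of_isNilpotent
  have hnorm : (M.map π).Normal := Subgroup.NormalizerCondition.normal_of_coatom _ hnc hcoatom
  have := hnorm.comap π
  rwa [hcm] at this
end

section
/- Let G = V ⋊ K be in the minimal solvable setting (V elementary abelian unique minimal normal subgroup, K nontrivial nilpotent irreducible complement, trivial center). Then for every v ∈ V there exists t ∈ V such that v belongs to the setwise product K·K^t. -/
open Pointwise

/-- A nontrivial nilpotent group has nontrivial center. -/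
lemma center_ne_bot_of_isNilpotent {H : Type*} [Group H] [Nontrivial H]
    (h : Group.IsNilpotent H) : Subgroup.center H ≠ ⊥ := by
  intro hc
  have hall : ∀ m, Subgroup.upperCentralSeries H m = ⊥ := by
    intro m
    induction m with
    | zero => simp
    | succ m ih =>
      ext x
      simp only [Subgroup.mem_upperCentralSeries_succ_iff, ih, Subgroup.mem_bot, commutatorElement_def]
      constructor
      · intro hx
        have : x ∈ Subgroup.center H := by
          rw [Subgroup.mem_center_iff]
          intro y
          have := hx y
          rw [mul_inv_eq_one, mul_inv_eq_iff_eq_mul] at this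
          exact this.symm
        rw [hc] at this
        exact this
      · rintro rfl
        intro y
        group
  obtain ⟨m, hm⟩ := h.nilpotent
  rw [hall m] at hm
  exact bot_ne_top hm

theorem stmt_13 {G : Type*} [Group G] [Finite G] (p n : ℕ) (hp : p.Prime) (hn : 1 ≤ n)
    (V K : Subgroup G)
    -- V is elementary abelian of order p^n
    (hVnorm : V.Normal) (hcardV : Nat.card V = p ^ n)
    (helem : ∀ v ∈ V, v ^ p = 1) (hVab : ∀ a ∈ V, ∀ b ∈ V, a * b = b * a)
    -- K is a nontrivial nilpotent complement to V with p ∤ |K|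
    (hKne : K ≠ ⊥) (hKnil : Group.IsNilpotent K)
    (hcompl1 : V ⊓ K = ⊥) (hcompl2 : V ⊔ K = ⊤)
    (hcop : ¬ p ∣ Nat.card K)
    -- K acts faithfully and irreducibly on V
    (hfaith : ∀ x ∈ K, (∀ v ∈ V, x * v * x⁻¹ = v) → x = 1)
    (hirr : ∀ W : Subgroup G, W ≤ V → (∀ x ∈ K, ∀ w ∈ W, x * w * x⁻¹ ∈ W) →
      W = ⊥ ∨ W = V)
    -- V is the unique minimal normal subgroup of G
    (hVne : V ≠ ⊥) (hmin : ∀ N : Subgroup G, N.Normal → N ≠ ⊥ → V ≤ N)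
    -- G has trivial center
    (hZ : Subgroup.center G = ⊥) :
    ∀ v ∈ V, ∃ t ∈ V, v ∈ (K : Set G) * ((conjugate K t : Subgroup G) : Set G) := by
  -- Pick a nontrivial element z of the center of K
  haveI : Nontrivial K := (Subgroup.nontrivial_iff_ne_bot K).mpr hKne
  have hcne := center_ne_bot_of_isNilpotent hKnil
  obtain ⟨z, hzc, hzne⟩ : ∃ z : K, z ∈ Subgroup.center K ∧ z ≠ 1 := by
    by_contra hcon
    push_neg at hcon
    apply hcne
    ext x
    simp only [Subgroup.mem_bot]
    constructor
    · intro hx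
      by_contra hne
      exact hne (hcon x hx)
    · rintro rfl; exact Subgroup.one_mem _
  set zg : G := (z : G) with hzg
  have hzK : zg ∈ K := z.2
  have hzgne : zg ≠ 1 := fun hcon => hzne (Subtype.ext hcon)
  have hzcomm : ∀ x ∈ K, x * zg = zg * x := by
    intro x hx
    have := (Subgroup.mem_center_iff.mp hzc) ⟨x, hx⟩
    exact congrArg Subtype.val this
  -- the commutator map f(w) = zg⁻¹ * w * zg * w⁻¹
  have hfmem : ∀ w ∈ V, zg⁻¹ * w * zg * w⁻¹ ∈ V := by
    intro w hw
    have h1 : zg⁻¹ * w * zg⁻¹⁻¹ ∈ V := hVnorm.conj_mem w hw zg⁻¹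
    rw [inv_inv] at h1
    exact mul_mem h1 (inv_mem hw)
  have key : ∀ w₁ ∈ V, ∀ w₂ ∈ V,
      (zg⁻¹ * w₁ * zg * w₁⁻¹) * (zg⁻¹ * w₂ * zg * w₂⁻¹) =
        zg⁻¹ * (w₁ * w₂) * zg * (w₁ * w₂)⁻¹ := by
    intro w₁ h₁ w₂ h₂
    have hX : zg⁻¹ * w₂ * zg * w₂⁻¹ ∈ V := hfmem w₂ h₂
    have hc : w₁ * (zg⁻¹ * w₂ * zg * w₂⁻¹) = (zg⁻¹ * w₂ * zg * w₂⁻¹) * w₁ :=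
      hVab w₁ h₁ _ hX
    have hconj : w₁ * (zg⁻¹ * w₂ * zg * w₂⁻¹) * w₁⁻¹ = zg⁻¹ * w₂ * zg * w₂⁻¹ := by
      rw [hc]; group
    calc (zg⁻¹ * w₁ * zg * w₁⁻¹) * (zg⁻¹ * w₂ * zg * w₂⁻¹)
        = (zg⁻¹ * w₁ * zg * w₁⁻¹) * (w₁ * (zg⁻¹ * w₂ * zg * w₂⁻¹) * w₁⁻¹) := by
          rw [hconj]
      _ = zg⁻¹ * (w₁ * w₂) * zg * (w₁ * w₂)⁻¹ := by group
  -- define the subgroup W = {f(w) : w ∈ V}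
  let W : Subgroup G := {
    carrier := {g | ∃ w ∈ V, g = zg⁻¹ * w * zg * w⁻¹}
    one_mem' := ⟨1, one_mem V, by group⟩
    mul_mem' := by
      rintro a b ⟨w₁, h₁, rfl⟩ ⟨w₂, h₂, rfl⟩
      exact ⟨w₁ * w₂, mul_mem h₁ h₂, key w₁ h₁ w₂ h₂⟩
    inv_mem' := by
      rintro a ⟨w, hw, rfl⟩
      refine ⟨w⁻¹, inv_mem hw, ?_⟩
      have h1 : (zg⁻¹ * w * zg * w⁻¹) * (zg⁻¹ * w⁻¹ * zg * w⁻¹⁻¹) = 1 := by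
        rw [key w hw w⁻¹ (inv_mem hw)]
        group
      exact inv_eq_of_mul_eq_one_right h1 }
  have hWmem : ∀ g, g ∈ W ↔ ∃ w ∈ V, g = zg⁻¹ * w * zg * w⁻¹ := fun g => Iff.rfl
  have hWle : W ≤ V := by
    rintro g ⟨w, hw, rfl⟩
    exact hfmem w hw
  have hWinv : ∀ x ∈ K, ∀ w ∈ W, x * w * x⁻¹ ∈ W := by
    rintro x hx g ⟨w, hw, rfl⟩
    refine ⟨x * w * x⁻¹, hVnorm.conj_mem w hw x, ?_⟩
    have h1 : x * zg * x⁻¹ = zg := by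
      rw [hzcomm x hx]; group
    calc x * (zg⁻¹ * w * zg * w⁻¹) * x⁻¹
        = (x * zg * x⁻¹)⁻¹ * (x * w * x⁻¹) * (x * zg * x⁻¹) * (x * w * x⁻¹)⁻¹ := by
          group
      _ = zg⁻¹ * (x * w * x⁻¹) * zg * (x * w * x⁻¹)⁻¹ := by rw [h1]
  -- by irreducibility, W = ⊥ or W = V
  rcases hirr W hWle hWinv with hbot | hV
  · -- W = ⊥ means z centralizes V, so z = 1 by faithfulness: contradiction
    exfalso
    apply hzgne
    apply hfaith zg hzK
    intro v hv
    have : zg⁻¹ * v * zg * v⁻¹ ∈ W := ⟨v, hv, rfl⟩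
    rw [hbot, Subgroup.mem_bot] at this
    have hvz : zg⁻¹ * v * zg = v := by
      have := mul_eq_one_iff_eq_inv.mp this
      rw [inv_inv] at this
      exact this
    calc zg * v * zg⁻¹ = zg * (zg⁻¹ * v * zg) * zg⁻¹ := by rw [hvz]
      _ = v := by group
  · -- W = V: any v ∈ V is f(w), take t = w⁻¹
    intro v hv
    rw [← hV] at hv
    obtain ⟨w, hw, rfl⟩ := hv
    refine ⟨w⁻¹, inv_mem hw, ?_⟩
    refine ⟨zg⁻¹, Subgroup.inv_mem K hzK, w * zg * w⁻¹, ?_, by group⟩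
    show w * zg * w⁻¹ ∈ conjugate K w⁻¹
    refine ⟨zg, hzK, ?_⟩
    simp [MulAut.conj]
end

section
/- For n ≥ 1, let X_n be the set of integers of the form Σ_{i=0}^{h} (−1)^i 2^{a_i} with 0 ≤ h ≤ n−1 and 0 ≤ a_0 < a_1 < ... < a_h ≤ n−1. Then X_n = {x ∈ ℤ : −2^{n−1}+1 ≤ x ≤ 2^{n−1}} \ {0}. -/
/-- `X n`: the set of alternating-sign sums `∑ (-1)^i * 2^(a i)` of distinct powers of 2
with strictly increasing exponents `a 0 < a 1 < ... < a h ≤ n - 1`. -/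
def altSums (n : ℕ) : Set ℤ :=
  {x : ℤ | ∃ h : ℕ, h ≤ n - 1 ∧ ∃ a : ℕ → ℕ, StrictMonoOn a (Set.Iic h) ∧ a h ≤ n - 1 ∧
    x = ∑ i ∈ Finset.range (h + 1), (-1 : ℤ) ^ i * 2 ^ (a i)}

private lemma altSums_le_apply {a : ℕ → ℕ} {h : ℕ} (ha : StrictMonoOn a (Set.Iic h)) :
    ∀ i ≤ h, i ≤ a i := by
  intro i
  induction i with
  | zero => intro _; exact Nat.zero_le _
  | succ i ih =>
    intro hi
    have h1 : i ≤ a i := ih (by omega)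
    have h2 : a i < a (i + 1) :=
      ha (Set.mem_Iic.2 (by omega)) (Set.mem_Iic.2 hi) (Nat.lt_succ_self i)
    omega

private lemma altSums_bound (h : ℕ) : ∀ a : ℕ → ℕ, StrictMonoOn a (Set.Iic h) →
    (Even h → 1 ≤ (∑ i ∈ Finset.range (h+1), (-1:ℤ)^i * 2^(a i)) ∧
      (∑ i ∈ Finset.range (h+1), (-1:ℤ)^i * 2^(a i)) ≤ 2^(a h)) ∧
    (Odd h → -2^(a h) + 1 ≤ (∑ i ∈ Finset.range (h+1), (-1:ℤ)^i * 2^(a i)) ∧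
      (∑ i ∈ Finset.range (h+1), (-1:ℤ)^i * 2^(a i)) ≤ -1) := by
  induction h with
  | zero =>
    intro a _
    constructor
    · intro _
      rw [Finset.sum_range_one]
      norm_num
      exact one_le_pow₀ one_le_two
    · intro hodd; exact absurd hodd (by decide)
  | succ h ih =>
    intro a ha
    have hmono : StrictMonoOn a (Set.Iic h) := ha.mono (Set.Iic_subset_Iic.2 (Nat.le_succ h))
    have hlt : a h < a (h + 1) :=
      ha (Set.mem_Iic.2 (Nat.le_succ h)) (Set.mem_Iic.2 le_rfl) (Nat.lt_succ_self h)
    have hpow : 2 * (2:ℤ)^(a h) ≤ 2^(a (h+1)) := by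
      calc 2 * (2:ℤ)^(a h) = 2^(a h + 1) := by ring
        _ ≤ 2^(a (h+1)) := pow_le_pow_right₀ one_le_two hlt
    have hpos : (1:ℤ) ≤ 2^(a h) := one_le_pow₀ one_le_two
    obtain ⟨ihe, iho⟩ := ih a hmono
    rw [Finset.sum_range_succ]
    constructor
    · intro heven1
      have hodd : Odd h := Nat.Even.sub_odd (by omega) heven1 odd_one
      obtain ⟨l1, l2⟩ := iho hodd
      have hsign : (-1:ℤ)^(h+1) = 1 := heven1.neg_one_pow
      rw [hsign, one_mul]
      constructor <;> linarith
    · intro hodd1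
      have heven : Even h := Nat.Odd.sub_odd hodd1 odd_one
      obtain ⟨l1, l2⟩ := ihe heven
      have hsign : (-1:ℤ)^(h+1) = -1 := hodd1.neg_one_pow
      rw [hsign, neg_one_mul]
      constructor <;> linarith

private lemma altSums_append_sum (aa : ℕ → ℕ) (h b : ℕ) :
    ∑ i ∈ Finset.range (h+1+1), (-1:ℤ)^i * 2^((fun i => if i ≤ h then aa i else b) i) =
      (∑ i ∈ Finset.range (h+1), (-1:ℤ)^i * 2^(aa i)) + (-1)^(h+1) * 2^b := by
  rw [Finset.sum_range_succ]
  congr 1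
  · refine Finset.sum_congr rfl fun i hi => ?_
    have : i ≤ h := Nat.lt_succ_iff.mp (Finset.mem_range.mp hi)
    simp [this]
  · simp

private lemma altSums_append_mono {aa : ℕ → ℕ} {h m : ℕ} (hmono : StrictMonoOn aa (Set.Iic h))
    (hle : aa h ≤ m) :
    StrictMonoOn (fun i => if i ≤ h then aa i else m + 1) (Set.Iic (h+1)) := by
  intro i hi j hj hij
  simp only [Set.mem_Iic] at hi hj
  by_cases hjh : j ≤ h
  · have hih : i ≤ h := by omega
    simpa [hih, hjh] using hmono (Set.mem_Iic.2 hih) (Set.mem_Iic.2 hjh) hij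
  · have hih : i ≤ h := by omega
    have : aa i ≤ aa h := hmono.monotoneOn (Set.mem_Iic.2 hih) (Set.mem_Iic.2 le_rfl) hih
    simp only [hih, if_pos, hjh, if_neg, if_false, if_true]
    omega

private lemma altSums_build (m : ℕ) : ∀ x : ℤ,
    (1 ≤ x → x ≤ 2^m → ∃ h, ∃ a : ℕ → ℕ, Even h ∧ StrictMonoOn a (Set.Iic h) ∧ a h ≤ m ∧
      x = ∑ i ∈ Finset.range (h+1), (-1:ℤ)^i * 2^(a i)) ∧
    (-2^m + 1 ≤ x → x ≤ -1 → ∃ h, ∃ a : ℕ → ℕ, Odd h ∧ StrictMonoOn a (Set.Iic h) ∧ a h ≤ m ∧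
      x = ∑ i ∈ Finset.range (h+1), (-1:ℤ)^i * 2^(a i)) := by
  induction m with
  | zero =>
    intro x
    constructor
    · intro h1 h2
      have hx : x = 1 := le_antisymm (by simpa using h2) h1
      exact ⟨0, fun _ => 0, Even.zero, by
        intro i hi j hj hij; simp only [Set.mem_Iic, Nat.le_zero] at hi hj; omega,
        le_refl _, by simp [hx]⟩
    · intro h1 h2; simp at h1; omega
  | succ m ih =>
    intro x
    constructor
    · intro h1 h2
      by_cases hsmall : x ≤ 2^m
      · obtain ⟨h, a, he, hm, hl, hs⟩ := (ih x).1 h1 hsmall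
        exact ⟨h, a, he, hm, hl.trans (Nat.le_succ m), hs⟩
      · push_neg at hsmall
        by_cases hx : x = 2^(m+1)
        · exact ⟨0, fun _ => m+1, Even.zero, by
            intro i hi j hj hij; simp only [Set.mem_Iic, Nat.le_zero] at hi hj; omega,
            le_refl _, by simp [hx]⟩
        · have hy1 : -2^m + 1 ≤ x - 2^(m+1) := by
            have : (2:ℤ)^(m+1) = 2 * 2^m := by ring
            omega
          have hy2 : x - 2^(m+1) ≤ -1 := by omega
          obtain ⟨h, aa, hodd, hmono, hle, hsum⟩ := (ih (x - 2^(m+1))).2 hy1 hy2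
          refine ⟨h+1, fun i => if i ≤ h then aa i else m+1,
            hodd.add_one,
            altSums_append_mono hmono hle,
            by simp, ?_⟩
          rw [altSums_append_sum, ← hsum, Even.neg_one_pow hodd.add_one]
          ring
    · intro h1 h2
      by_cases hsmall : -2^m + 1 ≤ x
      · obtain ⟨h, a, he, hm, hl, hs⟩ := (ih x).2 hsmall h2
        exact ⟨h, a, he, hm, hl.trans (Nat.le_succ m), hs⟩
      · push_neg at hsmall
        have hy1 : 1 ≤ x + 2^(m+1) := by
          have : (2:ℤ)^(m+1) = 2 * 2^m := by ring
          omega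
        have hy2 : x + 2^(m+1) ≤ 2^m := by
          have : (2:ℤ)^(m+1) = 2 * 2^m := by ring
          omega
        obtain ⟨h, aa, heven, hmono, hle, hsum⟩ := (ih (x + 2^(m+1))).1 hy1 hy2
        refine ⟨h+1, fun i => if i ≤ h then aa i else m+1,
          Even.add_one heven,
          altSums_append_mono hmono hle,
          by simp, ?_⟩
        rw [altSums_append_sum, ← hsum]
        have : (-1:ℤ)^(h+1) = -1 := (Even.add_one heven).neg_one_pow
        rw [this]
        ring

theorem stmt_17 (n : ℕ) (hn : 1 ≤ n) :
    altSums n =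
      {x : ℤ | -2 ^ (n - 1) + 1 ≤ x ∧ x ≤ 2 ^ (n - 1)} \ {0} := by
  ext x
  constructor
  · rintro ⟨h, hh, a, hmono, hle, hx⟩
    have hpow : (2:ℤ)^(a h) ≤ 2^(n-1) := pow_le_pow_right₀ one_le_two hle
    obtain ⟨be, bo⟩ := altSums_bound h a hmono
    have hp1 : (1:ℤ) ≤ 2^(n-1) := one_le_pow₀ one_le_two
    constructor
    · rcases Nat.even_or_odd h with he | ho
      · obtain ⟨l1, l2⟩ := be he
        exact ⟨by linarith [hx ▸ l1], by linarith [hx ▸ l2]⟩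
      · obtain ⟨l1, l2⟩ := bo ho
        exact ⟨by linarith [hx ▸ l1], by linarith [hx ▸ l2]⟩
    · simp only [Set.mem_singleton_iff]
      rcases Nat.even_or_odd h with he | ho
      · obtain ⟨l1, _⟩ := be he
        intro h0; rw [h0] at hx; linarith [hx ▸ l1]
      · obtain ⟨_, l2⟩ := bo ho
        intro h0; rw [h0] at hx; linarith [hx ▸ l2]
  · rintro ⟨⟨hb1, hb2⟩, h0⟩
    simp only [Set.mem_singleton_iff] at h0
    rcases lt_or_ge 0 x with hpos | hneg
    · obtain ⟨h, a, _, hmono, hle, hsum⟩ := (altSums_build (n-1) x).1 hpos hb2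
      exact ⟨h, le_trans (altSums_le_apply hmono h le_rfl) hle, a, hmono, hle, hsum⟩
    · have hneg' : x ≤ -1 := by omega
      obtain ⟨h, a, _, hmono, hle, hsum⟩ := (altSums_build (n-1) x).2 hb1 hneg'
      exact ⟨h, le_trans (altSums_le_apply hmono h le_rfl) hle, a, hmono, hle, hsum⟩
end

section
/- For n ≥ 1 and any integer k with 1 ≤ k < 2^n, every residue class in {1, ..., k} modulo k+1 is represented by some element of X_n, where X_n is the set of alternating-sign sums Σ(−1)^i 2^{a_i} with 0 ≤ a_0 < ... < a_h ≤ n−1. -/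
lemma altsums_id_le (h : ℕ) (a : ℕ → ℕ) (ha : StrictMonoOn a (Set.Iic h)) :
    ∀ i, i ≤ h → i ≤ a i := by
  intro i
  induction i with
  | zero => intro _; exact Nat.zero_le _
  | succ n ih =>
    intro hi
    have hn : n ≤ h := by omega
    have h1 := ih hn
    have h2 : a n < a (n + 1) := ha (Set.mem_Iic.2 hn) (Set.mem_Iic.2 hi) (Nat.lt_succ_self n)
    omega

lemma append_term (h e : ℕ) (a : ℕ → ℕ) (ha : StrictMonoOn a (Set.Iic h)) (hae : a h ≤ e)
    (x : ℤ) (hx : x = ∑ i ∈ Finset.range (h + 1), (-1 : ℤ) ^ i * 2 ^ (a i)) :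
    ∃ b : ℕ → ℕ, StrictMonoOn b (Set.Iic (h + 1)) ∧ b (h + 1) = e + 1 ∧
      x + (-1 : ℤ) ^ (h + 1) * 2 ^ (e + 1)
        = ∑ i ∈ Finset.range (h + 1 + 1), (-1 : ℤ) ^ i * 2 ^ (b i) := by
  refine ⟨fun i => if i ≤ h then a i else e + 1, ?_, by simp, ?_⟩
  · intro i hi j hj hij
    simp only [Set.mem_Iic] at hi hj
    by_cases hjh : j ≤ h
    · have hih : i ≤ h := le_of_lt (lt_of_lt_of_le hij hjh)
      simp only [hih, hjh, if_true]
      exact ha (Set.mem_Iic.2 hih) (Set.mem_Iic.2 hjh) hij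
    · by_cases hih : i ≤ h
      · have hle : a i ≤ a h :=
          ha.monotoneOn (Set.mem_Iic.2 hih) (Set.mem_Iic.2 le_rfl) hih
        simp only [hih, hjh, if_true, if_false]
        omega
      · omega
  · rw [Finset.sum_range_succ]
    have hcong : ∀ i ∈ Finset.range (h + 1),
        (-1 : ℤ) ^ i * 2 ^ (if i ≤ h then a i else e + 1) = (-1 : ℤ) ^ i * 2 ^ (a i) := by
      intro i hi
      have : i ≤ h := Nat.lt_succ_iff.mp (Finset.mem_range.mp hi)
      simp [this]
    rw [Finset.sum_congr rfl hcong, ← hx]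
    simp

lemma key : ∀ e : ℕ,
    (∀ m : ℕ, 1 ≤ m → m ≤ 2 ^ e → ∃ h : ℕ, Even h ∧ ∃ a : ℕ → ℕ,
      StrictMonoOn a (Set.Iic h) ∧ a h ≤ e ∧
      (m : ℤ) = ∑ i ∈ Finset.range (h + 1), (-1 : ℤ) ^ i * 2 ^ (a i)) ∧
    (∀ m : ℕ, 1 ≤ m → m ≤ 2 ^ e - 1 → ∃ h : ℕ, Odd h ∧ ∃ a : ℕ → ℕ,
      StrictMonoOn a (Set.Iic h) ∧ a h ≤ e ∧
      (-(m : ℤ)) = ∑ i ∈ Finset.range (h + 1), (-1 : ℤ) ^ i * 2 ^ (a i)) := by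
  intro e
  induction e with
  | zero =>
    constructor
    · intro m hm1 hm2
      have : m = 1 := by omega
      subst this
      exact ⟨0, Even.zero, fun _ => 0, by
        intro i hi j hj hij
        simp only [Set.mem_Iic, Nat.le_zero] at hi hj
        omega, le_rfl, by simp⟩
    · intro m hm1 hm2
      omega
  | succ e ih =>
    obtain ⟨ihp, ihn⟩ := ih
    have hpow : 2 ^ (e + 1) = 2 * 2 ^ e := by ring
    constructor
    · intro m hm1 hm2
      by_cases hle : m ≤ 2 ^ e
      · obtain ⟨h, hev, a, ha, hae, hsum⟩ := ihp m hm1 hle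
        exact ⟨h, hev, a, ha, Nat.le_succ_of_le hae, hsum⟩
      · by_cases heq : m = 2 ^ (e + 1)
        · refine ⟨0, Even.zero, fun _ => e + 1, ?_, le_rfl, by simp [heq]⟩
          intro i hi j hj hij
          simp only [Set.mem_Iic, Nat.le_zero] at hi hj
          omega
        · set p := 2 ^ (e + 1) - m with hp
          have hp1 : 1 ≤ p := by omega
          have hp2 : p ≤ 2 ^ e - 1 := by omega
          obtain ⟨h, hodd, a, ha, hae, hsum⟩ := ihn p hp1 hp2
          obtain ⟨b, hb, hbtop, hbsum⟩ := append_term h e a ha hae _ hsum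
          refine ⟨h + 1, Odd.add_one hodd, _, hb, by simp [hbtop], ?_⟩
          rw [← hbsum]
          have hsign : (-1 : ℤ) ^ (h + 1) = 1 := (Odd.add_one hodd).neg_one_pow
          rw [hsign]
          have hpc : (p : ℤ) = 2 ^ (e + 1) - (m : ℤ) := by
            rw [hp]
            push_cast [Nat.cast_sub (by omega : m ≤ 2 ^ (e + 1))]
            ring
          rw [hpc]; ring
    · intro m hm1 hm2
      by_cases hle : m ≤ 2 ^ e - 1
      · obtain ⟨h, hodd, a, ha, hae, hsum⟩ := ihn m hm1 hle
        exact ⟨h, hodd, a, ha, Nat.le_succ_of_le hae, hsum⟩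
      · set p := 2 ^ (e + 1) - m with hp
        have hp1 : 1 ≤ p := by omega
        have hp2 : p ≤ 2 ^ e := by omega
        obtain ⟨h, hev, a, ha, hae, hsum⟩ := ihp p hp1 hp2
        obtain ⟨b, hb, hbtop, hbsum⟩ := append_term h e a ha hae _ hsum
        refine ⟨h + 1, Even.add_one hev, _, hb, by simp [hbtop], ?_⟩
        rw [← hbsum]
        have hsign : (-1 : ℤ) ^ (h + 1) = -1 := (Even.add_one hev).neg_one_pow
        rw [hsign]
        have hpc : (p : ℤ) = 2 ^ (e + 1) - (m : ℤ) := by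
          rw [hp]
          push_cast [Nat.cast_sub (by omega : m ≤ 2 ^ (e + 1))]
          ring
        rw [hpc]; ring

lemma mem_altSums_pos (n : ℕ) (hn : 1 ≤ n) (m : ℕ) (hm1 : 1 ≤ m) (hm2 : m ≤ 2 ^ (n - 1)) :
    (m : ℤ) ∈ altSums n := by
  obtain ⟨h, _, a, ha, hae, hsum⟩ := (key (n - 1)).1 m hm1 hm2
  exact ⟨h, le_trans (altsums_id_le h a ha h le_rfl) hae, a, ha, hae, hsum⟩

lemma mem_altSums_neg (n : ℕ) (hn : 1 ≤ n) (m : ℕ) (hm1 : 1 ≤ m) (hm2 : m ≤ 2 ^ (n - 1) - 1) :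
    (-(m : ℤ)) ∈ altSums n := by
  obtain ⟨h, _, a, ha, hae, hsum⟩ := (key (n - 1)).2 m hm1 hm2
  exact ⟨h, le_trans (altsums_id_le h a ha h le_rfl) hae, a, ha, hae, hsum⟩

theorem stmt_18 (n : ℕ) (hn : 1 ≤ n) (k : ℕ) (hk1 : 1 ≤ k) (hk2 : k < 2 ^ n) :
    ∀ j : ℕ, 1 ≤ j → j ≤ k →
      ∃ x ∈ altSums n, x ≡ (j : ℤ) [ZMOD ((k : ℤ) + 1)] := by
  intro j hj1 hj2
  have hpow : 2 ^ n = 2 * 2 ^ (n - 1) := by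
    have h1 : n - 1 + 1 = n := Nat.sub_add_cancel hn
    calc 2 ^ n = 2 ^ (n - 1 + 1) := by rw [h1]
      _ = 2 * 2 ^ (n - 1) := by ring
  by_cases hle : j ≤ 2 ^ (n - 1)
  · exact ⟨(j : ℤ), mem_altSums_pos n hn j hj1 hle, Int.ModEq.refl _⟩
  · set m := k + 1 - j with hm
    have hm1 : 1 ≤ m := by omega
    have hm2 : m ≤ 2 ^ (n - 1) - 1 := by omega
    refine ⟨-(m : ℤ), mem_altSums_neg n hn m hm1 hm2, ?_⟩
    rw [Int.ModEq]
    have hmc : (m : ℤ) = (k : ℤ) + 1 - (j : ℤ) := by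
      rw [hm]; push_cast [Nat.cast_sub (by omega : j ≤ k + 1)]; ring
    rw [hmc]
    have : -((k : ℤ) + 1 - j) = j + ((k : ℤ) + 1) * (-1) := by ring
    rw [this, Int.add_mul_emod_self_left]
end

section
/- Let p be an odd prime and D_{2p} the dihedral group of order 2p. Then γ_cp(D_{2p}) = ⌈log₂ p⌉ + 1; that is, the minimal number of pairwise conjugate proper subgroups whose setwise product equals D_{2p} is ⌈log₂ p⌉ + 1, achieved by conjugates of a reflection subgroup of order 2. -/
open Pointwise

/-- `G` is a product, in some order, of `k` pairwise conjugate proper subgroups. -/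
def IsConjProdCover {G : Type*} [Group G] (k : ℕ) : Prop :=
  ∃ l : List (Subgroup G), l.length = k ∧ 2 ≤ l.length ∧
    (∀ A ∈ l, A ≠ ⊤) ∧ (∀ A ∈ l, ∀ B ∈ l, ∃ g : G, B = conjugate A g) ∧
    (l.map (fun A => (A : Set G))).prod = Set.univ

/-- `γ_cp(G)`: the minimal number of pairwise conjugate proper subgroups whose setwise
product is `G`; `⊤` (infinity) if no such factorization exists. -/
noncomputable def gammaCP (G : Type*) [Group G] : ℕ∞ :=
  sInf {k : ℕ∞ | ∃ n : ℕ, k = (n : ℕ∞) ∧ IsConjProdCover (G := G) n}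

namespace Stmt19Aux

open DihedralGroup Subgroup

variable {p : ℕ}

/-- The order-2 subgroup generated by the reflection `sr a`. -/
def K (a : ZMod p) : Subgroup (DihedralGroup p) := Subgroup.zpowers (sr a)

lemma sr_sq (a : ZMod p) : (sr a : DihedralGroup p) ^ 2 = 1 := by
  rw [pow_two, sr_mul_sr, sub_self, one_def]

lemma K_coe (a : ZMod p) : (K a : Set (DihedralGroup p)) = {1, sr a} := by
  ext x
  simp only [K, SetLike.mem_coe, Subgroup.mem_zpowers_iff, Set.mem_insert_iff,
    Set.mem_singleton_iff]
  constructor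
  · rintro ⟨k, rfl⟩
    have h2 : orderOf (sr a : DihedralGroup p) = 2 := orderOf_sr a
    have := zpow_mod_orderOf (sr a : DihedralGroup p) k
    rw [h2] at this
    push_cast at this
    rcases Int.emod_two_eq k with h | h
    · left; rw [← this, h, zpow_zero]
    · right; rw [← this, h, zpow_one]
  · rintro (rfl | rfl)
    · exact ⟨0, zpow_zero _⟩
    · exact ⟨1, zpow_one _⟩

lemma one_mem_K_coe (a : ZMod p) : (1 : DihedralGroup p) ∈ (K a : Set (DihedralGroup p)) := by
  rw [K_coe]; left; rfl

lemma sr_mem_K_coe (a : ZMod p) : (sr a : DihedralGroup p) ∈ (K a : Set (DihedralGroup p)) := by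
  rw [K_coe]; right; rfl

/-- The product of the sets `K (2^0), …, K (2^(m-1))`. -/
def S (p m : ℕ) : Set (DihedralGroup p) :=
  ((List.range m).map (fun j => (K (((2 ^ j : ℕ) : ZMod p)) : Set (DihedralGroup p)))).prod

lemma S_succ (m : ℕ) :
    S p (m + 1) = S p m * (K (((2 ^ m : ℕ) : ZMod p)) : Set (DihedralGroup p)) := by
  rw [S, S, List.range_succ, List.map_append, List.prod_append, List.map_singleton,
    List.prod_singleton]

lemma claim (m : ℕ) :
    (∀ n : ℕ, 1 ≤ n → n ≤ 2 ^ m → sr ((n : ZMod p)) ∈ S p (m + 1)) ∧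
    (∀ n : ℕ, n < 2 ^ m → r ((n : ZMod p)) ∈ S p (m + 1)) := by
  induction m with
  | zero =>
    have hS : S p 1 = (K (((1 : ℕ) : ZMod p)) : Set (DihedralGroup p)) := by
      rw [S, List.range_succ, List.range_zero, List.nil_append, List.map_singleton,
        List.prod_singleton]
      norm_num
    constructor
    · intro n h1 h2
      have : n = 1 := by omega
      subst this
      rw [hS]
      exact sr_mem_K_coe _
    · intro n h
      have : n = 0 := by omega
      subst this
      rw [hS]
      rw [Nat.cast_zero, ← one_def]; exact one_mem_K_coe _
  | succ m ih =>
    obtain ⟨ihsr, ihr⟩ := ih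
    rw [S_succ (m := m + 1)]
    constructor
    · intro n h1 h2
      by_cases h : n ≤ 2 ^ m
      · have := Set.mul_mem_mul (ihsr n h1 h) (one_mem_K_coe (((2 ^ (m+1) : ℕ) : ZMod p)))
        rwa [mul_one] at this
      · push_neg at h
        set d := 2 ^ (m + 1) - n with hd
        have hdn : d + n = 2 ^ (m + 1) := by
          have : 2 ^ (m+1) = 2 * 2 ^ m := by ring
          omega
        have hdlt : d < 2 ^ m := by
          have : 2 ^ (m+1) = 2 * 2 ^ m := by ring
          omega
        have hmem := Set.mul_mem_mul (ihr d hdlt) (sr_mem_K_coe (((2 ^ (m+1) : ℕ) : ZMod p)))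
        rw [r_mul_sr] at hmem
        have : ((2 ^ (m+1) : ℕ) : ZMod p) - ((d : ℕ) : ZMod p) = ((n : ℕ) : ZMod p) := by
          rw [← hdn]; push_cast; ring
        rwa [this] at hmem
    · intro n h
      by_cases hlt : n < 2 ^ m
      · have := Set.mul_mem_mul (ihr n hlt) (one_mem_K_coe (((2 ^ (m+1) : ℕ) : ZMod p)))
        rwa [mul_one] at this
      · push_neg at hlt
        set d := 2 ^ (m + 1) - n with hd
        have hdn : d + n = 2 ^ (m + 1) := by
          have : 2 ^ (m+1) = 2 * 2 ^ m := by ring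
          omega
        have hd1 : 1 ≤ d := by
          omega
        have hdle : d ≤ 2 ^ m := by
          have : 2 ^ (m+1) = 2 * 2 ^ m := by ring
          omega
        have hmem := Set.mul_mem_mul (ihsr d hd1 hdle) (sr_mem_K_coe (((2 ^ (m+1) : ℕ) : ZMod p)))
        rw [sr_mul_sr] at hmem
        have : ((2 ^ (m+1) : ℕ) : ZMod p) - ((d : ℕ) : ZMod p) = ((n : ℕ) : ZMod p) := by
          rw [← hdn]; push_cast; ring
        rwa [this] at hmem

lemma prod_univ (hp : p.Prime) (hodd : p ≠ 2) :
    S p (Nat.clog 2 p) * (K (0 : ZMod p) : Set (DihedralGroup p)) = Set.univ := by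
  haveI : NeZero p := ⟨hp.pos.ne'⟩
  have hp3 : 3 ≤ p := by
    rcases hp.two_le.lt_or_eq with h | h
    · omega
    · omega
  obtain ⟨m', hm⟩ : ∃ m', Nat.clog 2 p = m' + 1 := by
    have := Nat.clog_pos (b := 2) (n := p) (by norm_num) (by omega)
    exact ⟨Nat.clog 2 p - 1, by omega⟩
  have hple : p ≤ 2 ^ (m' + 1) := by
    have := Nat.le_pow_clog (by norm_num : 1 < 2) p
    rwa [hm] at this
  have h2m : 2 ^ (m' + 1) = 2 * 2 ^ m' := by ring
  rw [hm]
  apply Set.eq_univ_of_forall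
  intro x
  obtain ⟨hsrcl, hrcl⟩ := claim (p := p) m'
  have hval : ∀ c : ZMod p, ((c.val : ℕ) : ZMod p) = c := fun c => by
    simp [ZMod.natCast_val, ZMod.cast_id]
  cases x with
  | r c =>
    by_cases hlt : c.val < 2 ^ m'
    · have := Set.mul_mem_mul (hrcl c.val hlt) (one_mem_K_coe (0 : ZMod p))
      rwa [mul_one, hval] at this
    · push_neg at hlt
      have hcv : c.val < p := ZMod.val_lt c
      set d := p - c.val with hd
      have hd1 : 1 ≤ d := by omega
      have hdle : d ≤ 2 ^ m' := by omega
      have hmem := Set.mul_mem_mul (hsrcl d hd1 hdle) (sr_mem_K_coe (0 : ZMod p))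
      rw [sr_mul_sr] at hmem
      have hdc : (0 : ZMod p) - ((d : ℕ) : ZMod p) = c := by
        have hdp : (d : ℕ) + c.val = p := by omega
        have : ((d : ℕ) : ZMod p) + ((c.val : ℕ) : ZMod p) = ((p : ℕ) : ZMod p) := by
          rw [← Nat.cast_add, hdp]
        rw [ZMod.natCast_self, hval] at this
        linear_combination -this
      rwa [hdc] at hmem
  | sr c =>
    by_cases h0 : c.val = 0
    · have hc0 : c = 0 := by rw [← hval c, h0, Nat.cast_zero]
      have h1S : (1 : DihedralGroup p) ∈ S p (m' + 1) := by
        have := hrcl 0 (by positivity)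
        rwa [Nat.cast_zero, ← one_def] at this
      have := Set.mul_mem_mul h1S (sr_mem_K_coe (0 : ZMod p))
      rw [one_mul] at this
      rwa [hc0]
    · by_cases hle : c.val ≤ 2 ^ m'
      · have := Set.mul_mem_mul (hsrcl c.val (by omega) hle) (one_mem_K_coe (0 : ZMod p))
        rwa [mul_one, hval] at this
      · push_neg at hle
        have hcv : c.val < p := ZMod.val_lt c
        set d := p - c.val with hd
        have hdlt : d < 2 ^ m' := by omega
        have hmem := Set.mul_mem_mul (hrcl d hdlt) (sr_mem_K_coe (0 : ZMod p))
        rw [r_mul_sr] at hmem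
        have hdc : (0 : ZMod p) - ((d : ℕ) : ZMod p) = c := by
          have hdp : (d : ℕ) + c.val = p := by omega
          have : ((d : ℕ) : ZMod p) + ((c.val : ℕ) : ZMod p) = ((p : ℕ) : ZMod p) := by
            rw [← Nat.cast_add, hdp]
          rw [ZMod.natCast_self, hval] at this
          linear_combination -this
        rwa [hdc] at hmem

lemma K_ne_top (hp : p.Prime) (a : ZMod p) : K a ≠ ⊤ := by
  haveI : Fact (1 < p) := ⟨hp.one_lt⟩
  intro h
  have : (r 1 : DihedralGroup p) ∈ (K a : Set (DihedralGroup p)) := by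
    rw [h]; trivial
  rw [K_coe] at this
  rcases this with h1 | h1
  · rw [one_def] at h1
    injection h1 with h1'
    exact one_ne_zero h1'
  · exact absurd h1 (by simp)

lemma conj_K (hp : p.Prime) (hodd : p ≠ 2) (a b : ZMod p) :
    ∃ g : DihedralGroup p, K b = conjugate (K a) g := by
  haveI : Fact p.Prime := ⟨hp⟩
  have h2 : (2 : ZMod p) ≠ 0 := by
    intro h
    have : ((2 : ℕ) : ZMod p) = 0 := by push_cast; exact h
    rw [ZMod.natCast_eq_zero_iff] at this
    have := Nat.le_of_dvd (by norm_num) this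
    have := hp.two_le
    interval_cases p
    · exact hodd rfl
  set t := (b - a) * (2 : ZMod p)⁻¹ with ht
  refine ⟨r t, ?_⟩
  simp only [conjugate, K]
  rw [MonoidHom.map_zpowers]
  congr 1
  show sr b = (MulAut.conj (r t)⁻¹) (sr a)
  rw [MulAut.conj_apply]
  have h1 : (r t : DihedralGroup p)⁻¹ = r (-t) := rfl
  have h1' : (r (-t) : DihedralGroup p)⁻¹ = r t := by
    have : (r (-t) : DihedralGroup p)⁻¹ = r (-(-t)) := rfl
    rw [this, neg_neg]
  rw [h1, h1', r_mul_sr, sr_mul_r]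
  congr 1
  have h2t : t * 2 = b - a := by
    rw [ht, mul_assoc, inv_mul_cancel₀ h2, mul_one]
  have : a - -t + t = a + t * 2 := by ring
  rw [this, h2t]
  ring

lemma upper (hp : p.Prime) (hodd : p ≠ 2) :
    IsConjProdCover (G := DihedralGroup p) (Nat.clog 2 p + 1) := by
  refine ⟨(List.range (Nat.clog 2 p)).map (fun j => K (((2 ^ j : ℕ) : ZMod p))) ++ [K 0],
    ?_, ?_, ?_, ?_, ?_⟩
  · simp
  · have := Nat.clog_pos (by norm_num : 1 < 2) (by have := hp.two_le; omega : 2 ≤ p)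
    simp
    omega
  · intro A hA
    simp only [List.mem_append, List.mem_map, List.mem_range, List.mem_singleton] at hA
    rcases hA with ⟨j, _, rfl⟩ | rfl <;> exact K_ne_top hp _
  · intro A hA B hB
    simp only [List.mem_append, List.mem_map, List.mem_range, List.mem_singleton] at hA hB
    have ha : ∃ a, A = K a := by
      rcases hA with ⟨j, _, rfl⟩ | rfl
      · exact ⟨_, rfl⟩
      · exact ⟨_, rfl⟩
    have hb : ∃ b, B = K b := by
      rcases hB with ⟨j, _, rfl⟩ | rfl
      · exact ⟨_, rfl⟩
      · exact ⟨_, rfl⟩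
    obtain ⟨a, rfl⟩ := ha
    obtain ⟨b, rfl⟩ := hb
    exact conj_K hp hodd a b
  · have h := prod_univ hp hodd
    rw [S] at h
    simpa [List.flatMap, Function.comp_def] using h


lemma card_conjugate {G : Type*} [Group G] (A : Subgroup G) (g : G) :
    Nat.card (conjugate A g) = Nat.card A := by
  rw [conjugate]
  exact (Nat.card_congr
    (A.equivMapOfInjective (MulAut.conj g⁻¹).toMonoidHom (MulAut.conj g⁻¹).injective).toEquiv).symm

/-- The rotation subgroup. -/
def Rot (p : ℕ) : Subgroup (DihedralGroup p) := Subgroup.zpowers (r 1)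

lemma exists_of_mem_Rot {x : DihedralGroup p} (hx : x ∈ Rot p) : ∃ i : ZMod p, x = r i := by
  rw [Rot, Subgroup.mem_zpowers_iff] at hx
  obtain ⟨k, hk⟩ := hx
  cases k with
  | ofNat m =>
    refine ⟨(m : ZMod p), ?_⟩
    rw [← hk, Int.ofNat_eq_coe, zpow_natCast, r_one_pow]
  | negSucc m =>
    refine ⟨-((m + 1 : ℕ) : ZMod p), ?_⟩
    rw [← hk, zpow_negSucc, r_one_pow]
    rfl

lemma le_Rot_of_card (hp : p.Prime) (hodd : p ≠ 2) (A : Subgroup (DihedralGroup p))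
    (hA : Nat.card A = p) : A ≤ Rot p := by
  haveI : NeZero p := ⟨hp.pos.ne'⟩
  intro x hx
  cases x with
  | r i =>
    rw [Rot, Subgroup.mem_zpowers_iff]
    refine ⟨(i.val : ℤ), ?_⟩
    rw [zpow_natCast, r_one_pow]
    congr 1
    simp [ZMod.natCast_val, ZMod.cast_id]
  | sr i =>
    exfalso
    have hdvd : orderOf (⟨sr i, hx⟩ : A) ∣ Nat.card A := orderOf_dvd_natCard _
    rw [Subgroup.orderOf_mk, orderOf_sr, hA] at hdvd
    rcases (hp.eq_one_or_self_of_dvd 2 hdvd) with h | h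
    · norm_num at h
    · exact hodd h.symm

lemma prod_subset_Rot (ls : List (Set (DihedralGroup p)))
    (h : ∀ s ∈ ls, s ⊆ (Rot p : Set (DihedralGroup p))) :
    ls.prod ⊆ (Rot p : Set (DihedralGroup p)) := by
  induction ls with
  | nil =>
    intro x hx
    rw [List.prod_nil] at hx
    rw [Set.mem_one] at hx
    subst hx
    exact one_mem _
  | cons s t ih =>
    rw [List.prod_cons]
    intro x hx
    rw [Set.mem_mul] at hx
    obtain ⟨a, ha, b, hb, rfl⟩ := hx
    exact mul_mem (h s List.mem_cons_self ha)
      (ih (fun u hu => h u (List.mem_cons_of_mem _ hu)) hb)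

lemma card_prod_le (ls : List (Set (DihedralGroup p)))
    (h : ∀ s ∈ ls, Nat.card s ≤ 2) : Nat.card ls.prod ≤ 2 ^ ls.length := by
  induction ls with
  | nil =>
    rw [List.prod_nil]
    have : (1 : Set (DihedralGroup p)) = {1} := rfl
    rw [this]
    simp
  | cons s t ih =>
    rw [List.prod_cons, List.length_cons, pow_succ, mul_comm (2 ^ t.length) 2]
    exact le_trans Set.natCard_mul_le
      (Nat.mul_le_mul (h s List.mem_cons_self)
        (ih (fun u hu => h u (List.mem_cons_of_mem _ hu))))

lemma lower (hp : p.Prime) (hodd : p ≠ 2) (n : ℕ)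
    (h : IsConjProdCover (G := DihedralGroup p) n) : Nat.clog 2 p + 1 ≤ n := by
  haveI : NeZero p := ⟨hp.pos.ne'⟩
  obtain ⟨l, hlen, h2, hprop, hconj, hprod⟩ := h
  have hprod' : (l.map (fun A : Subgroup (DihedralGroup p) =>
      (A : Set (DihedralGroup p)))).prod = Set.univ := by
    simpa [List.flatMap, Function.comp_def] using hprod
  obtain ⟨A₀, l', rfl⟩ : ∃ A₀ l', l = A₀ :: l' := by
    cases l with
    | nil => simp at h2
    | cons a t => exact ⟨a, t, rfl⟩
  have hA₀ : A₀ ∈ A₀ :: l' := List.mem_cons_self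
  have hsame : ∀ A ∈ A₀ :: l', Nat.card A = Nat.card A₀ := by
    intro A hA
    obtain ⟨g, hg⟩ := hconj A₀ hA₀ A hA
    rw [hg, card_conjugate]
  have hd : Nat.card A₀ ∣ 2 * p := by
    rw [← DihedralGroup.nat_card]
    exact Subgroup.card_subgroup_dvd_card A₀
  have hne : Nat.card A₀ ≠ 2 * p := by
    intro hcard
    exact hprop A₀ hA₀ (Subgroup.eq_top_of_card_eq A₀ (by rw [hcard, DihedralGroup.nat_card]))
  have hpos : 0 < Nat.card A₀ := Nat.card_pos
  by_cases hpd : p ∣ Nat.card A₀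
  · exfalso
    have hcp : Nat.card A₀ = p := by
      obtain ⟨e, he⟩ := hpd
      have he2 : e ∣ 2 := by
        have h1 : p * e ∣ p * 2 := by rw [← he, mul_comm p 2]; exact hd
        exact (mul_dvd_mul_iff_left hp.pos.ne').mp h1
      rcases (Nat.prime_two.eq_one_or_self_of_dvd e he2) with h | h
      · rw [he, h, mul_one]
      · exfalso; rw [he, ← h, mul_comm] at hne; exact hne rfl
    have hsub : ((A₀ :: l').map (fun A : Subgroup (DihedralGroup p) =>
        (A : Set (DihedralGroup p)))).prod ⊆ (Rot p : Set (DihedralGroup p)) := by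
      apply prod_subset_Rot
      intro s hs
      rw [List.mem_map] at hs
      obtain ⟨A, hA, rfl⟩ := hs
      exact fun x hx => le_Rot_of_card hp hodd A (by rw [hsame A hA, hcp]) hx
    rw [hprod'] at hsub
    obtain ⟨i, hi⟩ := exists_of_mem_Rot (hsub (Set.mem_univ (sr 0)))
    exact absurd hi (by simp)
  · have hcop : (Nat.card A₀).Coprime p := ((hp.coprime_iff_not_dvd).mpr hpd).symm
    have hd2 : Nat.card A₀ ∣ 2 := hcop.dvd_of_dvd_mul_right hd
    have hle2 : Nat.card A₀ ≤ 2 := Nat.le_of_dvd (by norm_num) hd2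
    have hbound := card_prod_le ((A₀ :: l').map (fun A : Subgroup (DihedralGroup p) =>
        (A : Set (DihedralGroup p)))) ?_
    · rw [hprod', List.length_map, hlen] at hbound
      have huniv : Nat.card (Set.univ : Set (DihedralGroup p)) = 2 * p := by
        rw [Nat.card_congr (Equiv.Set.univ _), DihedralGroup.nat_card]
      rw [huniv] at hbound
      have hn2 : 2 ≤ n := by rw [← hlen]; exact h2
      have hp2 : p ≤ 2 ^ (n - 1) := by
        have : 2 ^ n = 2 * 2 ^ (n - 1) := by
          rw [← pow_succ']
          congr 1
          omega
        rw [this] at hbound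
        exact Nat.le_of_mul_le_mul_left hbound (by norm_num)
      have := (Nat.clog_le_iff_le_pow (by norm_num : 1 < 2)).mpr hp2
      omega
    · intro s hs
      rw [List.mem_map] at hs
      obtain ⟨A, hA, rfl⟩ := hs
      have : Nat.card A ≤ 2 := by rw [hsame A hA]; exact hle2
      exact this

end Stmt19Aux

theorem stmt_19 (p : ℕ) (hp : p.Prime) (hodd : p ≠ 2) :
    gammaCP (DihedralGroup p) = ((Nat.clog 2 p + 1 : ℕ) : ℕ∞) := by
  apply le_antisymm
  · exact sInf_le ⟨Nat.clog 2 p + 1, rfl, Stmt19Aux.upper hp hodd⟩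
  · apply le_sInf
    rintro b ⟨n, rfl, hc⟩
    exact_mod_cast Stmt19Aux.lower hp hodd n hc
end
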